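/- Existence of the first Brocard point: for any triangle ABC there exists a point Ω inside the triangle such that the angles ∠ΩAB, ∠ΩBC, and ∠ΩCA are all equal. -/

import Mathlib

open EuclideanGeometry

noncomputable instance : Fact (Module.finrank ℝ (EuclideanSpace ℝ (Fin 2)) = 2) :=
  ⟨finrank_euclideanSpace_fin⟩

noncomputable instance : Module.Oriented ℝ (EuclideanSpace ℝ (Fin 2)) (Fin 2) :=
  ⟨Module.Basis.orientation (PiLp.basisFun 2 ℝ (Fin 2))⟩

open scoped RealInnerProductSpace

private lemma norm_pos_of_sq_pos {E : Type*} [NormedAddCommGroup E] {w : E}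
    (h : 0 < ‖w‖ ^ 2) : 0 < ‖w‖ := by
  nlinarith [norm_nonneg w]

private lemma sq_inj_of_pos {a b : ℝ} (ha : 0 < a) (hb : 0 < b) (h : a^2 = b^2) : a = b := by
  nlinarith

set_option maxHeartbeats 1000000 in
private lemma brocard_algebra (y z p : ℝ) (hy : 0 < y) (hz : 0 < z) (hp : p^2 < y*z) :
    ∃ s t : ℝ, 0 < s ∧ 0 < t ∧ s + t < 1 ∧ 0 < y + z - 2*p ∧
      0 < s*z + t*p ∧
      0 < (s-1)*(p-z) + t*(y-p) ∧
      0 < -(s*p) - (t-1)*y ∧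
      0 < s^2*z + 2*s*t*p + t^2*y ∧
      0 < (s-1)^2*z + 2*(s-1)*t*p + t^2*y ∧
      0 < s^2*z + 2*s*(t-1)*p + (t-1)^2*y ∧
      (s*z + t*p)^2 * (((s-1)^2*z + 2*(s-1)*t*p + t^2*y) * (y + z - 2*p))
        = ((s-1)*(p-z) + t*(y-p))^2 * ((s^2*z + 2*s*t*p + t^2*y) * z) ∧
      ((s-1)*(p-z) + t*(y-p))^2 * ((s^2*z + 2*s*(t-1)*p + (t-1)^2*y) * y)
        = (-(s*p) - (t-1)*y)^2 * (((s-1)^2*z + 2*(s-1)*t*p + t^2*y) * (y + z - 2*p)) := by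
  have hx0 : 0 < y + z - 2*p := by nlinarith [sq_nonneg (y - z)]
  have hyzp : 0 < y + z - p := by linarith
  have hpyz : 0 < y*z - p^2 := by nlinarith
  have hD0 : 0 < (y+z-2*p)*z + (y+z-2*p)*y + y*z := by
    nlinarith [mul_pos hx0 hz, mul_pos hx0 hy, mul_pos hy hz]
  obtain ⟨D, hD⟩ : ∃ D' : ℝ, D' = (y+z-2*p)*z + (y+z-2*p)*y + y*z := ⟨_, rfl⟩
  rw [← hD] at hD0
  have hDne : D ≠ 0 := ne_of_gt hD0
  obtain ⟨s, hs⟩ : ∃ s' : ℝ, s' = (y+z-2*p)*y/D := ⟨_, rfl⟩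
  obtain ⟨t, ht⟩ : ∃ t' : ℝ, t' = y*z/D := ⟨_, rfl⟩
  have hs0 : 0 < s := by rw [hs]; exact div_pos (mul_pos hx0 hy) hD0
  have ht0 : 0 < t := by rw [ht]; exact div_pos (mul_pos hy hz) hD0
  have hst1 : s + t < 1 := by
    rw [hs, ht, ← add_div, div_lt_one hD0, hD]
    nlinarith [mul_pos hx0 hz]
  have hIAeq : s*z + t*p = y*z*(y+z-p)/D := by
    rw [hs, ht]; field_simp [hDne]; ring
  have hIBeq : (s-1)*(p-z) + t*(y-p) = z*(y+z-p)*(y+z-2*p)/D := by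
    rw [hs, ht]; field_simp [hDne]; rw [hD]; ring
  have hICeq : -(s*p) - (t-1)*y = (y+z-2*p)*y*(y+z-p)/D := by
    rw [hs, ht]; field_simp [hDne]; rw [hD]; ring
  refine ⟨s, t, hs0, ht0, hst1, hx0, ?_, ?_, ?_, ?_, ?_, ?_, ?_, ?_⟩
  · rw [hIAeq]; exact div_pos (mul_pos (mul_pos hy hz) hyzp) hD0
  · rw [hIBeq]; exact div_pos (mul_pos (mul_pos hz hyzp) hx0) hD0
  · rw [hICeq]; exact div_pos (mul_pos (mul_pos hx0 hy) hyzp) hD0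
  · nlinarith [sq_nonneg (s*z + t*p), mul_pos (mul_pos ht0 ht0) hpyz, hz]
  · nlinarith [sq_nonneg ((s-1)*z + t*p), mul_pos (mul_pos ht0 ht0) hpyz, hz]
  · nlinarith [sq_nonneg (s*p + (t-1)*y), mul_pos (mul_pos hs0 hs0) hpyz, hy]
  · have e1 : y^2 * ((s-1)^2*z + 2*(s-1)*t*p + t^2*y)
        = (y+z-2*p)*z*(s^2*z + 2*s*t*p + t^2*y) := by
      rw [hs, ht]; field_simp [hDne]; rw [hD]; ring
    rw [hIAeq, hIBeq]
    linear_combination ((y+z-p)^2*z^2*(y+z-2*p)/D^2) * e1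
  · have e2 : z^2 * (s^2*z + 2*s*(t-1)*p + (t-1)^2*y)
        = y*(y+z-2*p)*((s-1)^2*z + 2*(s-1)*t*p + t^2*y) := by
      rw [hs, ht]; field_simp [hDne]; rw [hD]; ring
    rw [hIBeq, hICeq]
    linear_combination ((y+z-p)^2*(y+z-2*p)^2*y/D^2) * e2

theorem brocard_point_exists
    (A B C : EuclideanSpace ℝ (Fin 2))
    (h : ¬ Collinear ℝ ({A, B, C} : Set (EuclideanSpace ℝ (Fin 2))))
    (horient : (∡ A B C).sign = 1) :
    ∃ Ω : EuclideanSpace ℝ (Fin 2),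
      Ω ∈ interior (convexHull ℝ ({A, B, C} : Set (EuclideanSpace ℝ (Fin 2)))) ∧
      ∠ Ω A B = ∠ Ω B C ∧ ∠ Ω B C = ∠ Ω C A := by
  classical
  have hAB : A ≠ B := by
    rintro rfl
    have e : ({A, A, C} : Set (EuclideanSpace ℝ (Fin 2))) = {A, C} := by
      ext q; simp
    apply h; rw [e]; exact collinear_pair ℝ A C
  have hAC : A ≠ C := by
    rintro rfl
    have e : ({A, B, A} : Set (EuclideanSpace ℝ (Fin 2))) = {A, B} := by
      ext q; simp; tauto
    apply h; rw [e]; exact collinear_pair ℝ A B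
  obtain ⟨u, hu⟩ : ∃ w : EuclideanSpace ℝ (Fin 2), w = B - A := ⟨_, rfl⟩
  obtain ⟨v, hv⟩ : ∃ w : EuclideanSpace ℝ (Fin 2), w = C - A := ⟨_, rfl⟩
  have hu0 : u ≠ 0 := by rw [hu]; exact sub_ne_zero.mpr (Ne.symm hAB)
  have hv0 : v ≠ 0 := by rw [hv]; exact sub_ne_zero.mpr (Ne.symm hAC)
  have hnu : ‖u‖ ≠ 0 := ne_of_gt (norm_pos_iff.mpr hu0)
  have hlin : ∀ r : ℝ, v ≠ r • u := by
    intro r hr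
    apply h
    rw [collinear_iff_of_mem (Set.mem_insert A {B, C})]
    refine ⟨u, ?_⟩
    intro q hq
    simp only [Set.mem_insert_iff, Set.mem_singleton_iff] at hq
    rcases hq with rfl | rfl | rfl
    · exact ⟨0, by simp⟩
    · exact ⟨1, by simp [hu]⟩
    · exact ⟨r, by rw [← hr, hv]; simp⟩
  have h1 : ⟪u, v⟫ < ‖u‖ * ‖v‖ := by
    refine inner_lt_norm_mul_iff_real.mpr fun heq => hlin (‖v‖/‖u‖) ?_
    calc v = ‖u‖⁻¹ • (‖u‖ • v) := by rw [smul_smul, inv_mul_cancel₀ hnu, one_smul]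
      _ = ‖u‖⁻¹ • (‖v‖ • u) := by rw [heq]
      _ = (‖v‖/‖u‖) • u := by rw [smul_smul, div_eq_inv_mul]
  have h2 : -⟪u, v⟫ < ‖u‖ * ‖v‖ := by
    have h' := inner_lt_norm_mul_iff_real (F := EuclideanSpace ℝ (Fin 2)) (x := u) (y := -v)
    rw [inner_neg_right, norm_neg] at h'
    refine h'.mpr fun heq => hlin (-(‖v‖/‖u‖)) ?_
    rw [smul_neg] at heq
    have h3 : ‖u‖ • v = -(‖v‖ • u) := by rw [heq, neg_neg]
    calc v = ‖u‖⁻¹ • (‖u‖ • v) := by rw [smul_smul, inv_mul_cancel₀ hnu, one_smul]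
      _ = ‖u‖⁻¹ • (-(‖v‖ • u)) := by rw [h3]
      _ = (-(‖v‖/‖u‖)) • u := by
          rw [smul_neg, smul_smul, ← neg_smul, div_eq_inv_mul]
  have hy0 : (0:ℝ) < ‖v‖^2 := pow_pos (norm_pos_iff.mpr hv0) 2
  have hz0 : (0:ℝ) < ‖u‖^2 := pow_pos (norm_pos_iff.mpr hu0) 2
  have hp2 : ⟪u, v⟫^2 < ‖v‖^2 * ‖u‖^2 := by nlinarith [h1, h2]
  obtain ⟨s, t, hs0, ht0, hst1, hx0, hIApos, hIBpos, hICpos, hnA, hnB, hnC, hid1, hid2⟩ :=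
    brocard_algebra (‖v‖^2) (‖u‖^2) ⟪u, v⟫ hy0 hz0 hp2
  obtain ⟨Ω, hΩ⟩ : ∃ w : EuclideanSpace ℝ (Fin 2), w = A + s • u + t • v := ⟨_, rfl⟩
  -- vector identities
  have hΩA : Ω - A = s • u + t • v := by rw [hΩ]; abel
  have hΩB : Ω - B = (s-1) • u + t • v := by rw [hΩ, hu, hv]; module
  have hΩC : Ω - C = s • u + (t-1) • v := by rw [hΩ, hu, hv]; module
  have hBA : B - A = u := hu.symm
  have hCB : C - B = v - u := by rw [hu, hv]; abel
  have hACv : A - C = -v := by rw [hv]; abel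
  -- inner product values
  have hiA : ⟪s • u + t • v, u⟫ = s*‖u‖^2 + t*⟪u, v⟫ := by
    simp only [inner_add_left, real_inner_smul_left, real_inner_comm v u,
      real_inner_self_eq_norm_sq]
  have hiB : ⟪(s-1) • u + t • v, v - u⟫
      = (s-1)*(⟪u, v⟫ - ‖u‖^2) + t*(‖v‖^2 - ⟪u, v⟫) := by
    simp only [inner_add_left, inner_sub_right, real_inner_smul_left, real_inner_comm v u]
    simp only [real_inner_self_eq_norm_sq]
    ring
  have hiC : ⟪s • u + (t-1) • v, -v⟫ = -(s*⟪u, v⟫) - (t-1)*‖v‖^2 := by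
    simp only [inner_add_left, inner_neg_right, real_inner_smul_left, real_inner_comm v u]
    simp only [real_inner_self_eq_norm_sq]
    ring
  -- squared norms
  have hnAv : ‖s • u + t • v‖^2 = s^2*‖u‖^2 + 2*s*t*⟪u, v⟫ + t^2*‖v‖^2 := by
    rw [← real_inner_self_eq_norm_sq]
    simp only [inner_add_left, inner_add_right, real_inner_smul_left, real_inner_smul_right,
      real_inner_comm v u]
    simp only [real_inner_self_eq_norm_sq]
    ring
  have hnBv : ‖(s-1) • u + t • v‖^2 = (s-1)^2*‖u‖^2 + 2*(s-1)*t*⟪u, v⟫ + t^2*‖v‖^2 := by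
    rw [← real_inner_self_eq_norm_sq]
    simp only [inner_add_left, inner_add_right, real_inner_smul_left, real_inner_smul_right,
      real_inner_comm v u]
    simp only [real_inner_self_eq_norm_sq]
    ring
  have hnCv : ‖s • u + (t-1) • v‖^2 = s^2*‖u‖^2 + 2*s*(t-1)*⟪u, v⟫ + (t-1)^2*‖v‖^2 := by
    rw [← real_inner_self_eq_norm_sq]
    simp only [inner_add_left, inner_add_right, real_inner_smul_left, real_inner_smul_right,
      real_inner_comm v u]
    simp only [real_inner_self_eq_norm_sq]
    ring
  have hnWv : ‖v - u‖^2 = ‖v‖^2 + ‖u‖^2 - 2*⟪u, v⟫ := by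
    rw [← real_inner_self_eq_norm_sq]
    simp only [inner_sub_left, inner_sub_right, real_inner_comm v u]
    simp only [real_inner_self_eq_norm_sq]
    ring
  have hnVv : ‖(-v : EuclideanSpace ℝ (Fin 2))‖^2 = ‖v‖^2 := by rw [norm_neg]
  -- norm positivity
  have hNApos : 0 < ‖s • u + t • v‖ := norm_pos_of_sq_pos (by rw [hnAv]; exact hnA)
  have hNBpos : 0 < ‖(s-1) • u + t • v‖ := norm_pos_of_sq_pos (by rw [hnBv]; exact hnB)
  have hNCpos : 0 < ‖s • u + (t-1) • v‖ := norm_pos_of_sq_pos (by rw [hnCv]; exact hnC)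
  have hNWpos : 0 < ‖v - u‖ := norm_pos_of_sq_pos (by rw [hnWv]; exact hx0)
  have hNUpos : 0 < ‖u‖ := norm_pos_iff.mpr hu0
  have hNVpos : 0 < ‖(-v : EuclideanSpace ℝ (Fin 2))‖ := by
    rw [norm_neg]; exact norm_pos_iff.mpr hv0
  refine ⟨Ω, ?_, ?_, ?_⟩
  · -- interior membership
    have hai : AffineIndependent ℝ ![A, B, C] := affineIndependent_iff_not_collinear_set.mpr h
    have htot : affineSpan ℝ (Set.range ![A, B, C]) = ⊤ := by
      rw [hai.affineSpan_eq_top_iff_card_eq_finrank_add_one]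
      simp [finrank_euclideanSpace_fin]
    let b : AffineBasis (Fin 3) ℝ (EuclideanSpace ℝ (Fin 2)) := ⟨![A, B, C], hai, htot⟩
    have hcoe : ⇑b = ![A, B, C] := rfl
    have hbrange : Set.range ⇑b = ({A, B, C} : Set (EuclideanSpace ℝ (Fin 2))) := by
      rw [hcoe]; ext q
      simp [Matrix.range_cons, Matrix.range_empty]
      tauto
    rw [← hbrange, b.interior_convexHull]
    have hwsum : ∑ j, (![1 - s - t, s, t]) j = 1 := by
      rw [Fin.sum_univ_three]
      simp only [Matrix.cons_val_zero, Matrix.cons_val_one, Matrix.head_cons,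
        Matrix.cons_val_two, Matrix.tail_cons]
      ring
    have hΩcomb : Ω = Finset.univ.affineCombination ℝ ⇑b ![1 - s - t, s, t] := by
      rw [hcoe, Finset.affineCombination_eq_linear_combination _ _ _ hwsum,
        Fin.sum_univ_three]
      simp only [Matrix.cons_val_zero, Matrix.cons_val_one, Matrix.head_cons,
        Matrix.cons_val_two, Matrix.tail_cons]
      rw [hΩ, hu, hv]; module
    intro i
    rw [hΩcomb, b.coord_apply_combination_of_mem (Finset.mem_univ i) hwsum]
    fin_cases i <;> simp <;> linarith
  · -- first angle equality
    rw [EuclideanGeometry.angle, EuclideanGeometry.angle, InnerProductGeometry.angle,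
      InnerProductGeometry.angle]
    simp only [vsub_eq_sub]
    rw [hΩA, hΩB, hBA, hCB]
    congr 1
    rw [hiA, hiB, div_eq_div_iff (ne_of_gt (mul_pos hNApos hNUpos))
      (ne_of_gt (mul_pos hNBpos hNWpos))]
    have hsq : ((s*‖u‖^2 + t*⟪u, v⟫) * (‖(s-1) • u + t • v‖ * ‖v - u‖))^2
        = (((s-1)*(⟪u, v⟫ - ‖u‖^2) + t*(‖v‖^2 - ⟪u, v⟫)) * (‖s • u + t • v‖ * ‖u‖))^2 := by
      rw [mul_pow, mul_pow, mul_pow, mul_pow, hnBv, hnWv, hnAv]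
      linear_combination hid1
    have ha : 0 < (s*‖u‖^2 + t*⟪u, v⟫) * (‖(s-1) • u + t • v‖ * ‖v - u‖) :=
      mul_pos hIApos (mul_pos hNBpos hNWpos)
    have hb : 0 < ((s-1)*(⟪u, v⟫ - ‖u‖^2) + t*(‖v‖^2 - ⟪u, v⟫)) * (‖s • u + t • v‖ * ‖u‖) :=
      mul_pos hIBpos (mul_pos hNApos hNUpos)
    exact sq_inj_of_pos ha hb hsq
  · -- second angle equality
    rw [EuclideanGeometry.angle, EuclideanGeometry.angle, InnerProductGeometry.angle,
      InnerProductGeometry.angle]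
    simp only [vsub_eq_sub]
    rw [hΩB, hΩC, hCB, hACv]
    congr 1
    rw [hiB, hiC, div_eq_div_iff (ne_of_gt (mul_pos hNBpos hNWpos))
      (ne_of_gt (mul_pos hNCpos hNVpos))]
    have hsq : (((s-1)*(⟪u, v⟫ - ‖u‖^2) + t*(‖v‖^2 - ⟪u, v⟫))
          * (‖s • u + (t-1) • v‖ * ‖(-v : EuclideanSpace ℝ (Fin 2))‖))^2
        = ((-(s*⟪u, v⟫) - (t-1)*‖v‖^2) * (‖(s-1) • u + t • v‖ * ‖v - u‖))^2 := by
      rw [mul_pow, mul_pow, mul_pow, mul_pow, hnCv, hnVv, hnBv, hnWv]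
      linear_combination hid2
    have ha : 0 < ((s-1)*(⟪u, v⟫ - ‖u‖^2) + t*(‖v‖^2 - ⟪u, v⟫))
        * (‖s • u + (t-1) • v‖ * ‖(-v : EuclideanSpace ℝ (Fin 2))‖) :=
      mul_pos hIBpos (mul_pos hNCpos hNVpos)
    have hb : 0 < (-(s*⟪u, v⟫) - (t-1)*‖v‖^2) * (‖(s-1) • u + t • v‖ * ‖v - u‖) :=
      mul_pos hICpos (mul_pos hNBpos hNWpos)
    exact sq_inj_of_pos ha hb hsq
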